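/- Let E be a Banach space and suppose (S_α) is a bounded net of continuous linear operators on E with S_α*γ → γ in norm for every γ ∈ E*. Then for every n-homogeneous polynomial P ∈ P_w(ⁿE) weakly continuous on bounded sets, ‖P − P∘S_α‖ → 0. -/

import Mathlib

open Filter Topology

universe u v

section PolyDefs

variable {E : Type u} [NormedAddCommGroup E] [NormedSpace ℝ E]

/-- `P` is a continuous `n`-homogeneous scalar polynomial on `E`. -/
def IsHomogPoly (n : ℕ) (P : E → ℝ) : Prop :=
  ∃ M : ContinuousMultilinearMap ℝ (fun _ : Fin n => E) ℝ, ∀ x, P x = M (fun _ => x)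

/-- The polynomial (sup) norm: `‖P‖ = sup_{‖x‖ ≤ 1} |P x|`. -/
noncomputable def polyNorm (P : E → ℝ) : ℝ :=
  sSup {r : ℝ | ∃ x : E, ‖x‖ ≤ 1 ∧ r = |P x|}

/-- A net is (norm) bounded. -/
def BoundedNet {ι : Type v} (x : ι → E) : Prop := ∃ C : ℝ, ∀ i, ‖x i‖ ≤ C

/-- The net `x` converges weakly to `x₀` along the filter `l`. -/
def WeaklyTendsto {ι : Type v} (x : ι → E) (l : Filter ι) (x₀ : E) : Prop :=
  ∀ γ : E →L[ℝ] ℝ, Tendsto (fun i => γ (x i)) l (𝓝 (γ x₀))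

/-- `P` is weakly continuous on bounded sets at the point `x₀`. -/
def WCBat (P : E → ℝ) (x₀ : E) : Prop :=
  ∀ (ι : Type u) (l : Filter ι), l.NeBot → ∀ x : ι → E,
    BoundedNet x → WeaklyTendsto x l x₀ → Tendsto (fun i => P (x i)) l (𝓝 (P x₀))

/-- `P ∈ P_w(ⁿE)`: continuous `n`-homogeneous and weakly continuous on bounded sets. -/
def WCB (n : ℕ) (P : E → ℝ) : Prop := IsHomogPoly n P ∧ ∀ x₀ : E, WCBat P x₀

/-- `P ∈ P_{w0}(ⁿE)`: weakly continuous on bounded sets at `0`. -/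
def WCB0 (n : ℕ) (P : E → ℝ) : Prop := IsHomogPoly n P ∧ WCBat P 0

end PolyDefs

open scoped Classical

namespace Stmt11Aux

variable {E : Type u} [NormedAddCommGroup E] [NormedSpace ℝ E]
variable {n : ℕ} (M : ContinuousMultilinearMap ℝ (fun _ : Fin n => E) ℝ)

/-- number of slots that pattern `φ` assigns to the `j`-th special vector -/
def fib {r : ℕ} (φ : Fin n → Option (Fin r)) (j : Fin r) : ℕ :=
  (Finset.univ.filter fun i => φ i = some j).card

def pat {r : ℕ} (φ : Fin n → Option (Fin r)) (uu : Fin r → E) (w : E) : Fin n → E :=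
  fun i => (φ i).elim w uu

/-- aggregate of `M` over all patterns with prescribed multiplicities `b`. -/
noncomputable def Gagg {r : ℕ} (b : Fin r → ℕ) (uu : Fin r → E) (w : E) : ℝ :=
  ∑ φ ∈ Finset.univ.filter
      (fun φ : Fin n → Option (Fin r) => ∀ j, fib φ j = b j),
    M (pat φ uu w)

lemma fib_le {r : ℕ} (φ : Fin n → Option (Fin r)) (j : Fin r) : fib φ j ≤ n := by
  classical
  simpa [fib] using (Finset.card_filter_le (Finset.univ : Finset (Fin n)) (fun i => φ i = some j))

lemma prod_elim {r : ℕ} (φ : Fin n → Option (Fin r)) (t : Fin r → ℝ) :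
    (∏ i, (φ i).elim 1 t) = ∏ j, t j ^ fib φ j := by
  classical
  have h1 : (∏ i, (φ i).elim 1 t)
      = ∏ o : Option (Fin r), ∏ i ∈ Finset.univ.filter (fun i => φ i = o),
          ((φ i).elim 1 t : ℝ) := by
    rw [Finset.prod_fiberwise_of_maps_to (fun i _ => Finset.mem_univ (φ i))]
  have h2 : ∀ o : Option (Fin r),
      (∏ i ∈ Finset.univ.filter (fun i => φ i = o), ((φ i).elim 1 t : ℝ))
        = (o.elim 1 t) ^ (Finset.univ.filter (fun i => φ i = o)).card := by
    intro o
    rw [Finset.prod_congr rfl (fun i hi => by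
      rw [(Finset.mem_filter.mp hi).2]), Finset.prod_const]
  rw [h1, Finset.prod_congr rfl (fun o _ => h2 o), Fintype.prod_option]
  simp [fib]

lemma expand {r : ℕ} (t : Fin r → ℝ) (uu : Fin r → E) (w : E) :
    M (fun _ => w + ∑ j, t j • uu j) =
    ∑ φ : Fin n → Option (Fin r), (∏ j, t j ^ fib φ j) * M (pat φ uu w) := by
  classical
  have hfun : (fun _ : Fin n => w + ∑ j, t j • uu j)
      = fun i : Fin n => ∑ o : Option (Fin r), (o.elim w (fun j => t j • uu j)) := by
    funext i
    rw [Fintype.sum_option]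
    simp
  calc M (fun _ : Fin n => w + ∑ j, t j • uu j)
      = M.toMultilinearMap (fun i : Fin n => ∑ o : Option (Fin r),
          (o.elim w fun j => t j • uu j)) := by rw [← hfun]; rfl
    _ = ∑ φ : Fin n → Option (Fin r), M.toMultilinearMap
          (fun i => (φ i).elim w (fun j => t j • uu j)) :=
        M.toMultilinearMap.map_sum (α := fun _ : Fin n => Option (Fin r))
          (fun _ o => o.elim w (fun j => t j • uu j))
    _ = ∑ φ : Fin n → Option (Fin r), (∏ j, t j ^ fib φ j) * M (pat φ uu w) := by
        refine Finset.sum_congr rfl ?_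
        intro φ _
        have harg : (fun i => (φ i).elim w fun j => t j • uu j)
            = fun i => ((φ i).elim 1 t : ℝ) • pat φ uu w i := by
          funext i
          cases h : φ i with
          | none => simp [pat, h]
          | some j => simp [pat, h]
        rw [harg, M.toMultilinearMap.map_smul_univ (fun i => ((φ i).elim 1 t : ℝ))
          (pat φ uu w), prod_elim, smul_eq_mul]
        rfl

lemma extractChi {r : ℕ} (cs ts : Fin r → Fin (n+1) → ℝ) (χ : Fin r → ℕ → ℝ)
    (hwt : ∀ j (d : ℕ), d ≤ n → ∑ m, cs j m * ts j m ^ d = χ j d)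
    (uu : Fin r → E) (w : E) :
    ∑ mm : Fin r → Fin (n+1),
      (∏ j, cs j (mm j)) * M (fun _ => w + ∑ j, ts j (mm j) • uu j)
      = ∑ φ : Fin n → Option (Fin r), (∏ j, χ j (fib φ j)) * M (pat φ uu w) := by
  classical
  have h1 : ∀ mm : Fin r → Fin (n+1),
      (∏ j, cs j (mm j)) * M (fun _ => w + ∑ j, ts j (mm j) • uu j)
      = ∑ φ : Fin n → Option (Fin r),
          (∏ j, cs j (mm j) * ts j (mm j) ^ fib φ j) * M (pat φ uu w) := by
    intro mm
    rw [expand M (fun j => ts j (mm j)) uu w, Finset.mul_sum]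
    refine Finset.sum_congr rfl (fun φ _ => ?_)
    rw [← mul_assoc, ← Finset.prod_mul_distrib]
  calc
    ∑ mm : Fin r → Fin (n+1),
      (∏ j, cs j (mm j)) * M (fun _ => w + ∑ j, ts j (mm j) • uu j)
      = ∑ mm : Fin r → Fin (n+1), ∑ φ : Fin n → Option (Fin r),
          (∏ j, cs j (mm j) * ts j (mm j) ^ fib φ j) * M (pat φ uu w) :=
        Finset.sum_congr rfl (fun mm _ => h1 mm)
    _ = ∑ φ : Fin n → Option (Fin r), ∑ mm : Fin r → Fin (n+1),
          (∏ j, cs j (mm j) * ts j (mm j) ^ fib φ j) * M (pat φ uu w) :=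
        Finset.sum_comm
    _ = ∑ φ : Fin n → Option (Fin r),
          (∏ j, ∑ m, cs j m * ts j m ^ fib φ j) * M (pat φ uu w) := by
        refine Finset.sum_congr rfl (fun φ _ => ?_)
        rw [← Finset.sum_mul]
        congr 1
        rw [Finset.prod_univ_sum]
        rw [show Fintype.piFinset (fun _ : Fin r => (Finset.univ : Finset (Fin (n+1))))
            = Finset.univ from Fintype.piFinset_univ]
    _ = ∑ φ : Fin n → Option (Fin r), (∏ j, χ j (fib φ j)) * M (pat φ uu w) := by
        refine Finset.sum_congr rfl (fun φ _ => ?_)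
        congr 1
        exact Finset.prod_congr rfl (fun j _ => hwt j _ (fib_le φ j))

lemma prod_ite_indicator {r : ℕ} (p : Fin r → Prop) [DecidablePred p] :
    (∏ j, if p j then (1:ℝ) else 0) = if (∀ j, p j) then (1:ℝ) else 0 := by
  by_cases h : ∀ j, p j
  · rw [if_pos h]
    exact Finset.prod_eq_one (fun j _ => if_pos (h j))
  · rw [if_neg h]
    push_neg at h
    obtain ⟨j, hj⟩ := h
    exact Finset.prod_eq_zero (Finset.mem_univ j) (if_neg hj)

lemma collapse {r : ℕ} (b : Fin r → ℕ) (F : (Fin n → Option (Fin r)) → ℝ) :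
    ∑ φ : Fin n → Option (Fin r),
      (∏ j, if fib φ j = b j then (1:ℝ) else 0) * F φ
    = ∑ φ ∈ Finset.univ.filter (fun φ : Fin n → Option (Fin r) => ∀ j, fib φ j = b j),
        F φ := by
  classical
  rw [Finset.sum_filter]
  refine Finset.sum_congr rfl (fun φ _ => ?_)
  rw [prod_ite_indicator]
  by_cases h : ∀ j, fib φ j = b j <;> simp [h]

lemma extract {r : ℕ} (b : Fin r → ℕ) (cs ts : Fin r → Fin (n+1) → ℝ)
    (hwt : ∀ j (d : ℕ), d ≤ n → ∑ m, cs j m * ts j m ^ d = if d = b j then 1 else 0)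
    (uu : Fin r → E) (w : E) :
    ∑ mm : Fin r → Fin (n+1),
      (∏ j, cs j (mm j)) * M (fun _ => w + ∑ j, ts j (mm j) • uu j)
      = Gagg M b uu w := by
  rw [extractChi M cs ts (fun j d => if d = b j then (1:ℝ) else 0) hwt uu w, Gagg]
  exact collapse (n := n) b _

lemma weights (k : ℕ) (hk : k ≤ n) :
    ∃ c : Fin (n+1) → ℝ, ∀ d : ℕ, d ≤ n →
      ∑ m, c m * (m : ℝ) ^ d = if d = k then 1 else 0 := by
  classical
  set A : Matrix (Fin (n+1)) (Fin (n+1)) ℝ := fun d m => ((m : ℕ) : ℝ) ^ (d : ℕ) with hA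
  have hAdet : A.det ≠ 0 := by
    have hAv : A = (Matrix.vandermonde (fun m : Fin (n+1) => ((m : ℕ) : ℝ))).transpose := by
      ext d m
      simp [Matrix.transpose_apply, Matrix.vandermonde, hA]
    rw [hAv, Matrix.det_transpose, Matrix.det_vandermonde]
    refine Finset.prod_ne_zero_iff.mpr (fun i _ => Finset.prod_ne_zero_iff.mpr (fun j hj => ?_))
    have hij : (i : ℕ) < (j : ℕ) := Fin.lt_iff_val_lt_val.mp (Finset.mem_Ioi.mp hj)
    have : ((i : ℕ) : ℝ) < ((j : ℕ) : ℝ) := by exact_mod_cast hij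
    exact sub_ne_zero.mpr (ne_of_gt this)
  have hunit : IsUnit A.det := isUnit_iff_ne_zero.mpr hAdet
  let e : Fin (n+1) → ℝ := fun d => if (d : ℕ) = k then (1:ℝ) else 0
  refine ⟨A⁻¹.mulVec e, ?_⟩
  intro d hd
  have hdv : A.mulVec (A⁻¹.mulVec e) = e := by
    rw [Matrix.mulVec_mulVec, Matrix.mul_nonsing_inv A hunit, Matrix.one_mulVec]
  have hthis := congrFun hdv ⟨d, Nat.lt_succ_of_le hd⟩
  rw [Matrix.mulVec] at hthis
  simp only [dotProduct] at hthis
  calc ∑ m, A⁻¹.mulVec e m * ((m : ℕ) : ℝ) ^ d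
      = ∑ m, A ⟨d, Nat.lt_succ_of_le hd⟩ m * A⁻¹.mulVec e m := by
        refine Finset.sum_congr rfl (fun m _ => ?_)
        rw [mul_comm]
    _ = e ⟨d, Nat.lt_succ_of_le hd⟩ := hthis
    _ = if d = k then 1 else 0 := by simp [e]


lemma sum_fib_add_card_none {r : ℕ} (φ : Fin n → Option (Fin r)) :
    (∑ j, fib φ j) + (Finset.univ.filter fun i => φ i = none).card = n := by
  classical
  have h := Finset.card_eq_sum_card_fiberwise
    (f := φ) (s := (Finset.univ : Finset (Fin n)))
    (t := (Finset.univ : Finset (Option (Fin r)))) (fun i _ => Finset.mem_univ (φ i))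
  rw [Finset.card_univ, Fintype.card_fin] at h
  rw [Fintype.sum_option] at h
  simp only [fib]
  omega

lemma sum_fib_le {r : ℕ} (φ : Fin n → Option (Fin r)) : (∑ j, fib φ j) ≤ n := by
  have := sum_fib_add_card_none φ
  omega

lemma Gagg_eq_zero_of_gt {r : ℕ} (b : Fin r → ℕ) (hgt : n < ∑ j, b j)
    (uu : Fin r → E) (w : E) : Gagg M b uu w = 0 := by
  classical
  rw [Gagg]
  refine Finset.sum_eq_zero (fun φ hφ => ?_)
  exfalso
  have hmem := (Finset.mem_filter.mp hφ).2
  have h1 : (∑ j, fib φ j) = ∑ j, b j := Finset.sum_congr rfl (fun j _ => hmem j)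
  have := sum_fib_le φ
  omega

lemma Gagg_indep {r : ℕ} (b : Fin r → ℕ) (hsum : (∑ j, b j) = n)
    (uu : Fin r → E) (w w' : E) :
    Gagg M b uu w = Gagg M b uu w' := by
  classical
  rw [Gagg, Gagg]
  refine Finset.sum_congr rfl (fun φ hφ => ?_)
  have hmem := (Finset.mem_filter.mp hφ).2
  have h1 : (∑ j, fib φ j) = n := by
    rw [Finset.sum_congr rfl (fun j _ => hmem j), hsum]
  have h2 : (Finset.univ.filter fun i => φ i = none).card = 0 := by
    have := sum_fib_add_card_none φ
    omega
  have hnone : ∀ i, φ i ≠ none := by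
    intro i hi
    have : i ∈ Finset.univ.filter fun i => φ i = none := by
      simp [hi]
    rw [Finset.card_eq_zero] at h2
    rw [h2] at this
    exact absurd this (Finset.notMem_empty i)
  congr 1
  funext i
  cases hi : φ i with
  | none => exact absurd hi (hnone i)
  | some j => simp [pat, hi]

lemma sum_grid_succ {r : ℕ} (F : (Fin (r+1) → Fin (n+1)) → ℝ) :
    ∑ mm : Fin (r+1) → Fin (n+1), F mm
    = ∑ m0 : Fin (n+1), ∑ mm : Fin r → Fin (n+1), F (Fin.cons m0 mm) := by
  have h1 : ∑ mm : Fin (r+1) → Fin (n+1), F mm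
      = ∑ p : Fin (n+1) × (Fin r → Fin (n+1)), F (Fin.cons p.1 p.2) :=
    Fintype.sum_equiv (Fin.consEquiv fun _ => Fin (n+1)).symm _ _
      (fun mm => by simp [Fin.consEquiv, Fin.cons_self_tail, Fin.tail])
  rw [h1, Fintype.sum_prod_type]

lemma Gagg_nil (b : Fin 0 → ℕ) (uu : Fin 0 → E) (w : E) :
    Gagg M b uu w = M (fun _ => w) := by
  classical
  rw [Gagg]
  have h1 : (Finset.univ.filter (fun φ : Fin n → Option (Fin 0) => ∀ j, fib φ j = b j))
      = Finset.univ :=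
    Finset.filter_true_of_mem (fun φ _ => fun j => j.elim0)
  rw [h1]
  have h2 : (Finset.univ : Finset (Fin n → Option (Fin 0)))
      = {fun _ => (none : Option (Fin 0))} := by
    refine Finset.eq_singleton_iff_unique_mem.mpr ⟨Finset.mem_univ _, ?_⟩
    intro f _
    funext i
    cases h : f i with
    | none => rfl
    | some j => exact j.elim0
  rw [h2, Finset.sum_singleton]
  rfl

def psing : Fin (n+1) → ℝ := fun m => if m = 0 then 1 else 0

lemma psing_sum {n : ℕ} (x : Fin (n+1) → ℝ) : ∑ m, psing m * x m = x 0 := by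
  classical
  have h : ∀ m : Fin (n+1), psing m * x m = if m = 0 then x m else 0 := by
    intro m
    by_cases hm : m = 0 <;> simp [psing, hm]
  rw [Finset.sum_congr rfl (fun m _ => h m)]
  rw [Finset.sum_ite_eq' Finset.univ (0 : Fin (n+1)) x]
  simp

lemma Gagg_cons_zero {r : ℕ} (b : Fin r → ℕ) (hbn : ∀ j, b j ≤ n)
    (uu : Fin r → E) (d w : E) :
    Gagg M (Fin.cons 0 b) (Fin.cons d uu) w = Gagg M b uu w := by
  classical
  choose cs hcs using fun j => weights (n := n) (b j) (hbn j)
  have hR := extract M b cs (fun _ m => ((m : ℕ) : ℝ)) hcs uu w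
  set cs' : Fin (r+1) → Fin (n+1) → ℝ := Fin.cons psing cs with hcs'
  set ts' : Fin (r+1) → Fin (n+1) → ℝ :=
    Fin.cons (fun _ => (0:ℝ)) (fun _ m => ((m : ℕ) : ℝ)) with hts'
  have hwt' : ∀ (j : Fin (r+1)) (dd : ℕ), dd ≤ n →
      ∑ m, cs' j m * ts' j m ^ dd
      = if dd = (Fin.cons 0 b : Fin (r+1) → ℕ) j then 1 else 0 := by
    intro j dd hdd
    refine Fin.cases ?_ ?_ j
    · simp only [hcs', hts', Fin.cons_zero]
      rw [psing_sum (fun _ => (0:ℝ) ^ dd)]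
      rw [zero_pow_eq]
    · intro j
      simp only [hcs', hts', Fin.cons_succ]
      exact hcs j dd hdd
  have hL := extract M (Fin.cons 0 b) cs' ts' hwt' (Fin.cons d uu) w
  rw [← hL, ← hR, sum_grid_succ]
  have hterm : ∀ (m0 : Fin (n+1)) (mm : Fin r → Fin (n+1)),
      (∏ j : Fin (r+1), cs' j ((Fin.cons m0 mm : Fin (r+1) → Fin (n+1)) j))
        * M (fun _ => w + ∑ j : Fin (r+1),
            ts' j ((Fin.cons m0 mm : Fin (r+1) → Fin (n+1)) j)
              • (Fin.cons d uu : Fin (r+1) → E) j)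
      = psing m0 *
        ((∏ j, cs j (mm j)) * M (fun _ => w + ∑ j, ((mm j : ℕ) : ℝ) • uu j)) := by
    intro m0 mm
    rw [Fin.prod_univ_succ]
    simp only [hcs', hts', Fin.cons_zero, Fin.cons_succ, mul_assoc]
    congr 2
    congr 1
    funext i
    rw [Fin.sum_univ_succ]
    simp only [Fin.cons_zero, Fin.cons_succ, zero_smul, zero_add]
  calc ∑ m0 : Fin (n+1), ∑ mm : Fin r → Fin (n+1),
        (∏ j : Fin (r+1), cs' j ((Fin.cons m0 mm : Fin (r+1) → Fin (n+1)) j))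
          * M (fun _ => w + ∑ j : Fin (r+1),
              ts' j ((Fin.cons m0 mm : Fin (r+1) → Fin (n+1)) j)
                • (Fin.cons d uu : Fin (r+1) → E) j)
      = ∑ m0 : Fin (n+1), psing m0 *
          (∑ mm : Fin r → Fin (n+1),
            (∏ j, cs j (mm j)) * M (fun _ => w + ∑ j, ((mm j : ℕ) : ℝ) • uu j)) := by
        refine Finset.sum_congr rfl (fun m0 _ => ?_)
        rw [Finset.mul_sum]
        exact Finset.sum_congr rfl (fun mm _ => hterm m0 mm)
    _ = ∑ mm : Fin r → Fin (n+1),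
            (∏ j, cs j (mm j)) * M (fun _ => w + ∑ j, ((mm j : ℕ) : ℝ) • uu j) := by
        rw [psing_sum (fun _ => ∑ mm : Fin r → Fin (n+1),
            (∏ j, cs j (mm j)) * M (fun _ => w + ∑ j, ((mm j : ℕ) : ℝ) • uu j))]

lemma Gagg_split {r : ℕ} (b : Fin r → ℕ) (hbn : ∀ j, b j ≤ n)
    (uu : Fin r → E) (w d : E) :
    Gagg M b uu (w + d)
      = ∑ c ∈ Finset.range (n+1), Gagg M (Fin.cons c b) (Fin.cons d uu) w := by
  classical
  choose cs hcs using fun j => weights (n := n) (b j) (hbn j)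
  have hL := extract M b cs (fun _ m => ((m : ℕ) : ℝ)) hcs uu (w + d)
  set cs' : Fin (r+1) → Fin (n+1) → ℝ := Fin.cons psing cs with hcs'
  set ts' : Fin (r+1) → Fin (n+1) → ℝ :=
    Fin.cons (fun _ => (1:ℝ)) (fun _ m => ((m : ℕ) : ℝ)) with hts'
  set χ : Fin (r+1) → ℕ → ℝ :=
    Fin.cons (fun _ => (1:ℝ)) (fun j dd => if dd = b j then 1 else 0) with hχ
  have hwt' : ∀ (j : Fin (r+1)) (dd : ℕ), dd ≤ n →
      ∑ m, cs' j m * ts' j m ^ dd = χ j dd := by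
    intro j dd hdd
    refine Fin.cases ?_ ?_ j
    · simp only [hcs', hts', hχ, Fin.cons_zero]
      rw [psing_sum (fun _ => (1:ℝ) ^ dd)]
      simp
    · intro j
      simp only [hcs', hts', hχ, Fin.cons_succ]
      exact hcs j dd hdd
  have hChi := extractChi M cs' ts' χ hwt' (Fin.cons d uu) w
  have hgrid : ∑ mm : Fin (r+1) → Fin (n+1),
      (∏ j, cs' j (mm j))
        * M (fun _ => w + ∑ j, ts' j (mm j) • (Fin.cons d uu : Fin (r+1) → E) j)
      = ∑ mm : Fin r → Fin (n+1),
          (∏ j, cs j (mm j)) * M (fun _ => (w + d) + ∑ j, ((mm j : ℕ) : ℝ) • uu j) := by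
    rw [sum_grid_succ]
    have hterm : ∀ (m0 : Fin (n+1)) (mm : Fin r → Fin (n+1)),
        (∏ j : Fin (r+1), cs' j ((Fin.cons m0 mm : Fin (r+1) → Fin (n+1)) j))
          * M (fun _ => w + ∑ j : Fin (r+1),
              ts' j ((Fin.cons m0 mm : Fin (r+1) → Fin (n+1)) j)
                • (Fin.cons d uu : Fin (r+1) → E) j)
        = psing m0 *
          ((∏ j, cs j (mm j)) * M (fun _ => (w + d) + ∑ j, ((mm j : ℕ) : ℝ) • uu j)) := by
      intro m0 mm
      rw [Fin.prod_univ_succ]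
      simp only [hcs', hts', Fin.cons_zero, Fin.cons_succ, mul_assoc]
      congr 2
      congr 1
      funext i
      rw [Fin.sum_univ_succ]
      simp only [Fin.cons_zero, Fin.cons_succ, one_smul]
      rw [← add_assoc]
    calc ∑ m0 : Fin (n+1), ∑ mm : Fin r → Fin (n+1),
          (∏ j : Fin (r+1), cs' j ((Fin.cons m0 mm : Fin (r+1) → Fin (n+1)) j))
            * M (fun _ => w + ∑ j : Fin (r+1),
                ts' j ((Fin.cons m0 mm : Fin (r+1) → Fin (n+1)) j)
                  • (Fin.cons d uu : Fin (r+1) → E) j)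
        = ∑ m0 : Fin (n+1), psing m0 *
            (∑ mm : Fin r → Fin (n+1),
              (∏ j, cs j (mm j)) * M (fun _ => (w + d) + ∑ j, ((mm j : ℕ) : ℝ) • uu j)) := by
          refine Finset.sum_congr rfl (fun m0 _ => ?_)
          rw [Finset.mul_sum]
          exact Finset.sum_congr rfl (fun mm _ => hterm m0 mm)
      _ = ∑ mm : Fin r → Fin (n+1),
              (∏ j, cs j (mm j)) * M (fun _ => (w + d) + ∑ j, ((mm j : ℕ) : ℝ) • uu j) := by
          rw [psing_sum (fun _ => ∑ mm : Fin r → Fin (n+1),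
              (∏ j, cs j (mm j)) * M (fun _ => (w + d) + ∑ j, ((mm j : ℕ) : ℝ) • uu j))]
  have hmain : Gagg M b uu (w + d)
      = ∑ ψ ∈ Finset.univ.filter
          (fun ψ : Fin n → Option (Fin (r+1)) => ∀ j : Fin r, fib ψ j.succ = b j),
          M (pat ψ (Fin.cons d uu) w) := by
    rw [← hL, ← hgrid, hChi]
    rw [Finset.sum_filter]
    refine Finset.sum_congr rfl (fun ψ _ => ?_)
    rw [Fin.prod_univ_succ]
    simp only [hχ, Fin.cons_zero, Fin.cons_succ, one_mul]
    rw [prod_ite_indicator]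
    by_cases h : ∀ j : Fin r, fib ψ j.succ = b j <;> simp [h]
  rw [hmain]
  have hfib : ∀ ψ ∈ Finset.univ.filter
      (fun ψ : Fin n → Option (Fin (r+1)) => ∀ j : Fin r, fib ψ j.succ = b j),
      fib ψ 0 ∈ Finset.range (n+1) :=
    fun ψ _ => Finset.mem_range.mpr (Nat.lt_succ_of_le (fib_le ψ 0))
  rw [← Finset.sum_fiberwise_of_maps_to hfib (fun ψ => M (pat ψ (Fin.cons d uu) w))]
  refine Finset.sum_congr rfl (fun c _ => ?_)
  rw [Gagg]
  rw [Finset.filter_filter]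
  refine Finset.sum_congr ?_ (fun ψ _ => rfl)
  refine Finset.filter_congr (fun ψ _ => ?_)
  constructor
  · intro h j
    refine Fin.cases ?_ ?_ j
    · rw [Fin.cons_zero]; exact h.2
    · intro j; rw [Fin.cons_succ]; exact h.1 j
  · intro h
    refine ⟨fun j => ?_, ?_⟩
    · have := h j.succ
      rwa [Fin.cons_succ] at this
    · have := h 0
      rwa [Fin.cons_zero] at this


lemma wcbat_net {P : E → ℝ} {w : E} (hP : WCBat P w) {τ : Type*} (F : Filter τ)
    (hF : F.NeBot) (x : τ → E) (C : ℝ) (hbd : ∀ ν, ‖x ν‖ ≤ C)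
    (hweak : ∀ γ : E →L[ℝ] ℝ, Tendsto (fun ν => γ (x ν)) F (𝓝 (γ w))) :
    Tendsto (fun ν => P (x ν)) F (𝓝 (P w)) := by
  haveI := hF
  let m : τ → {e : E // ‖e‖ ≤ C} := fun ν => ⟨x ν, hbd ν⟩
  have hnb : (Filter.map m F).NeBot := Filter.map_neBot
  have h := hP {e : E // ‖e‖ ≤ C} (Filter.map m F) hnb (fun e => e.1)
    ⟨C, fun e => e.2⟩ (fun γ => by
      rw [Filter.tendsto_map'_iff]
      exact hweak γ)
  rw [Filter.tendsto_map'_iff] at h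
  exact h

lemma Gnull (hM : ∀ x₀ : E, WCBat (fun x : E => M (fun _ => x)) x₀)
    {r : ℕ} (b : Fin r → ℕ) (j₀ : Fin r) (hj₀ : 1 ≤ b j₀) (hbn : ∀ j, b j ≤ n)
    {τ : Type*} (F : Filter τ) (hF : F.NeBot)
    (uu : Fin r → τ → E) (Cu : ℝ) (hu : ∀ j ν, ‖uu j ν‖ ≤ Cu)
    (hnull : ∀ j (γ : E →L[ℝ] ℝ), Tendsto (fun ν => γ (uu j ν)) F (𝓝 0))
    (w : E) :
    Tendsto (fun ν => Gagg M b (fun j => uu j ν) w) F (𝓝 0) := by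
  classical
  haveI := hF
  choose cs hcs using fun j => weights (n := n) (b j) (hbn j)
  have hrep : ∀ ν, Gagg M b (fun j => uu j ν) w
      = ∑ mm : Fin r → Fin (n+1),
          (∏ j, cs j (mm j)) * M (fun _ => w + ∑ j, ((mm j : ℕ) : ℝ) • uu j ν) :=
    fun ν => (extract M b cs (fun _ m => ((m : ℕ) : ℝ)) hcs (fun j => uu j ν) w).symm
  have hlim : Tendsto (fun ν => ∑ mm : Fin r → Fin (n+1),
      (∏ j, cs j (mm j)) * M (fun _ => w + ∑ j, ((mm j : ℕ) : ℝ) • uu j ν)) F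
      (𝓝 (∑ mm : Fin r → Fin (n+1), (∏ j, cs j (mm j)) * M (fun _ => w))) := by
    refine tendsto_finset_sum _ (fun mm _ => ?_)
    refine Tendsto.const_mul _ ?_
    have hP := wcbat_net (hM w) F hF (fun ν => w + ∑ j, ((mm j : ℕ) : ℝ) • uu j ν)
      (‖w‖ + ∑ _j : Fin r, (n : ℝ) * Cu) ?_ ?_
    · exact hP
    · intro ν
      refine le_trans (norm_add_le _ _) ?_
      gcongr
      refine le_trans (norm_sum_le _ _) ?_
      refine Finset.sum_le_sum (fun j _ => ?_)
      rw [norm_smul]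
      have h1 : ‖((mm j : ℕ) : ℝ)‖ ≤ (n : ℝ) := by
        rw [Real.norm_natCast]
        exact_mod_cast Nat.le_of_lt_succ (mm j).isLt
      exact mul_le_mul h1 (hu j ν) (norm_nonneg _) (by positivity)
    · intro γ
      have heq : (fun ν => γ (w + ∑ j, ((mm j : ℕ) : ℝ) • uu j ν))
          = fun ν => γ w + ∑ j, ((mm j : ℕ) : ℝ) * γ (uu j ν) := by
        funext ν
        rw [map_add, map_sum]
        congr 1
        exact Finset.sum_congr rfl (fun j _ => by rw [map_smul, smul_eq_mul])
      rw [heq]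
      have h2 : Tendsto (fun ν => ∑ j, ((mm j : ℕ) : ℝ) * γ (uu j ν)) F (𝓝 0) := by
        have h3 := tendsto_finset_sum (Finset.univ : Finset (Fin r))
          (fun j _ => (hnull j γ).const_mul ((mm j : ℕ) : ℝ))
        simpa using h3
      simpa using tendsto_const_nhds.add h2
  have hzero : (∑ mm : Fin r → Fin (n+1), (∏ j, cs j (mm j)) * M (fun _ => w)) = 0 := by
    rw [← Finset.sum_mul]
    have hprod : (∑ mm : Fin r → Fin (n+1), ∏ j, cs j (mm j)) = ∏ j, ∑ m, cs j m := by
      rw [Finset.prod_univ_sum]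
      rw [show Fintype.piFinset (fun _ : Fin r => (Finset.univ : Finset (Fin (n+1))))
          = Finset.univ from Fintype.piFinset_univ]
    rw [hprod]
    have hj : (∑ m, cs j₀ m) = 0 := by
      have h0 := hcs j₀ 0 (Nat.zero_le n)
      have : (if 0 = b j₀ then (1:ℝ) else 0) = 0 := by
        rw [if_neg]
        omega
      rw [this] at h0
      simpa using h0
    rw [Finset.prod_eq_zero (Finset.mem_univ j₀) hj, zero_mul]
  have := hlim.congr (fun ν => (hrep ν).symm)
  rwa [hzero] at this


lemma cons_net {r : ℕ} {τ : Type*} (d : τ → E) (uu : Fin r → τ → E) (ν : τ) :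
    (fun j => (Fin.cons d uu : Fin (r+1) → τ → E) j ν)
      = Fin.cons (d ν) (fun j => uu j ν) := by
  funext j
  refine Fin.cases ?_ ?_ j
  · rw [Fin.cons_zero, Fin.cons_zero]
  · intro j
    rw [Fin.cons_succ, Fin.cons_succ]

theorem claim (hM : ∀ x₀ : E, WCBat (fun x : E => M (fun _ => x)) x₀) :
    ∀ (p : ℕ) (r : ℕ) (b : Fin r → ℕ), 0 < r → (∀ j, 1 ≤ b j) →
      ((∑ j, b j) + p = n) →
      ∀ (τ : Type (max u v)) (F : Filter τ), F.NeBot →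
      ∀ (uu : Fin r → τ → E) (Cu : ℝ), (∀ j ν, ‖uu j ν‖ ≤ Cu) →
      (∀ j (γ : E →L[ℝ] ℝ), Tendsto (fun ν => γ (uu j ν)) F (𝓝 0)) →
      ∀ (y : τ → E) (Cy : ℝ), (∀ ν, ‖y ν‖ ≤ Cy) →
      ∀ (ε : ℝ), 0 < ε →
      ¬ (∀ᶠ ν in F, ε ≤ |Gagg M b (fun j => uu j ν) (y ν)|) := by
  intro p
  induction p using Nat.strong_induction_on with
  | _ p IH =>
  intro r b hr hb hsum τ F hF uu Cu hu hnull y Cy hy ε hε hEv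
  classical
  haveI := hF
  have hbn : ∀ j, b j ≤ n := by
    intro j
    have h1 : b j ≤ ∑ j, b j :=
      Finset.single_le_sum (fun _ _ => Nat.zero_le _) (Finset.mem_univ j)
    omega
  have hn1 : 1 ≤ n := by
    have h0 := hb ⟨0, hr⟩
    have h1 : b ⟨0, hr⟩ ≤ ∑ j, b j :=
      Finset.single_le_sum (fun _ _ => Nat.zero_le _) (Finset.mem_univ _)
    omega
  rcases Nat.eq_zero_or_pos p with hp0 | hppos
  · -- base case : no plain slots at all
    have hEq : ∀ ν, Gagg M b (fun j => uu j ν) (y ν) = Gagg M b (fun j => uu j ν) 0 :=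
      fun ν => Gagg_indep M b (by omega) _ _ _
    have h0 := Gnull M hM b ⟨0, hr⟩ (hb _) hbn F hF uu Cu hu hnull 0
    have h1 : Tendsto (fun ν => |Gagg M b (fun j => uu j ν) (y ν)|) F (𝓝 0) := by
      have h2 := h0.abs
      rw [abs_zero] at h2
      exact h2.congr (fun ν => by rw [← hEq ν])
    have := ge_of_tendsto h1 hEv
    linarith
  · -- inductive step
    set U : Ultrafilter τ := Ultrafilter.of F with hU
    have hUF : (U : Filter τ) ≤ F := Ultrafilter.of_le F
    have hEvU : ∀ᶠ ν in (U : Filter τ), ε ≤ |Gagg M b (fun j => uu j ν) (y ν)| :=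
      hEv.filter_mono hUF
    have hnullU : ∀ (j : Fin r) (γ : E →L[ℝ] ℝ),
        Tendsto (fun ν => γ (uu j ν)) (U : Filter τ) (𝓝 0) :=
      fun j γ => (hnull j γ).mono_left hUF
    have hrlim : ∀ γ : E →L[ℝ] ℝ, ∃ a : ℝ,
        Tendsto (fun ν => γ (y ν)) (U : Filter τ) (𝓝 a) := by
      intro γ
      have hb1 : ∀ ν, γ (y ν) ∈ Set.Icc (-(‖γ‖ * Cy)) (‖γ‖ * Cy) := by
        intro ν
        have h2 := γ.le_opNorm (y ν)
        rw [Real.norm_eq_abs] at h2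
        have h3 : ‖γ‖ * ‖y ν‖ ≤ ‖γ‖ * Cy :=
          mul_le_mul_of_nonneg_left (hy ν) (norm_nonneg γ)
        have h1 : |γ (y ν)| ≤ ‖γ‖ * Cy := by linarith
        rw [Set.mem_Icc]
        exact ⟨by linarith [(abs_le.mp h1).1], (abs_le.mp h1).2⟩
      have hmem : Set.Icc (-(‖γ‖ * Cy)) (‖γ‖ * Cy)
          ∈ (Ultrafilter.map (fun ν => γ (y ν)) U) := by
        apply Filter.mem_map.mpr
        exact Filter.univ_mem' hb1
      obtain ⟨a, -, ha⟩ := isCompact_Icc.ultrafilter_le_nhds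
        (Ultrafilter.map (fun ν => γ (y ν)) U) (Filter.le_principal_iff.mpr hmem)
      refine ⟨a, ?_⟩
      rwa [Ultrafilter.coe_map] at ha
    choose rl hrl using hrlim
    -- the stage index: a pair (finite set of functionals, precision index)
    let δf : Finset (E →L[ℝ] ℝ) × ℕ → ℝ := fun s => 1 / ((s.2 : ℝ) + 1)
    have hδpos : ∀ s, 0 < δf s := fun s => by positivity
    have hstage : ∀ s : Finset (E →L[ℝ] ℝ) × ℕ, ∃ β ν : τ,
        (∀ γ ∈ s.1, |γ (y β) - rl γ| ≤ δf s / 2) ∧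
        (∀ γ ∈ s.1, |γ (y ν) - rl γ| ≤ δf s / 2) ∧
        (∀ j, ∀ γ ∈ s.1, |γ (uu j ν)| ≤ δf s) ∧
        ε ≤ |Gagg M b (fun j => uu j ν) (y ν)| ∧
        |Gagg M b (fun j => uu j ν) (y β)| ≤ δf s := by
      intro s
      have hA : (∀ᶠ ν in (U : Filter τ), ∀ γ ∈ s.1, |γ (y ν) - rl γ| ≤ δf s / 2) := by
        rw [Filter.eventually_all_finset]
        intro γ hγ
        have h2 := Metric.tendsto_nhds.mp (hrl γ) (δf s / 2) (by positivity)
        exact h2.mono (fun ν hν => by rw [Real.dist_eq] at hν; linarith)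
      obtain ⟨β, hβ⟩ := hA.exists
      have hB : (∀ᶠ ν in (U : Filter τ), |Gagg M b (fun j => uu j ν) (y β)| ≤ δf s) := by
        have h0 := Gnull M hM b ⟨0, hr⟩ (hb _) hbn (U : Filter τ)
          (Ultrafilter.neBot U) uu Cu hu hnullU (y β)
        have h2 := Metric.tendsto_nhds.mp h0 (δf s) (hδpos s)
        exact h2.mono (fun ν hν => by
          rw [Real.dist_eq, sub_zero] at hν; exact le_of_lt hν)
      have hC : (∀ᶠ ν in (U : Filter τ), ∀ j, ∀ γ ∈ s.1, |γ (uu j ν)| ≤ δf s) := by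
        rw [Filter.eventually_all]
        intro j
        rw [Filter.eventually_all_finset]
        intro γ hγ
        have h2 := Metric.tendsto_nhds.mp (hnullU j γ) (δf s) (hδpos s)
        exact h2.mono (fun ν hν => by
          rw [Real.dist_eq, sub_zero] at hν; exact le_of_lt hν)
      obtain ⟨ν, hν1, hν2, hν3, hν4⟩ := (hA.and (hC.and (hB.and hEvU))).exists
      exact ⟨β, ν, hβ, hν1, hν2, hν4, hν3⟩
    choose βc νc hS1 hS2 hS3 hS4 hS5 using hstage
    have hsplit : ∀ s : Finset (E →L[ℝ] ℝ) × ℕ, δf s ≤ ε / 2 → ∃ c, 1 ≤ c ∧ c ≤ p ∧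
        ε / (2 * n) ≤ |Gagg M (Fin.cons c b)
          (Fin.cons (y (νc s) - y (βc s)) (fun j => uu j (νc s))) (y (βc s))| := by
      intro s hs
      have hkey := Gagg_split M b hbn (fun j => uu j (νc s)) (y (βc s))
        (y (νc s) - y (βc s))
      have hyy : y (βc s) + (y (νc s) - y (βc s)) = y (νc s) := by abel
      rw [hyy] at hkey
      have hEvs := hS4 s
      rw [hkey] at hEvs
      set T : ℕ → ℝ := fun c => Gagg M (Fin.cons c b)
        (Fin.cons (y (νc s) - y (βc s)) (fun j => uu j (νc s))) (y (βc s)) with hT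
      have hT0 : |T 0| ≤ δf s := by
        rw [hT]
        simp only
        rw [Gagg_cons_zero M b hbn]
        exact hS5 s
      have hsum' : ∑ c ∈ Finset.range (n+1), T c
          = T 0 + ∑ i ∈ Finset.range n, T (i+1) := by
        rw [Finset.sum_range_succ']
        ring
      have hbig : ε - δf s ≤ ∑ i ∈ Finset.range n, |T (i+1)| := by
        have habs := abs_add_le (T 0) (∑ i ∈ Finset.range n, T (i+1))
        have habs2 := Finset.abs_sum_le_sum_abs (fun i => T (i+1)) (Finset.range n)
        rw [hsum'] at hEvs
        linarith
      have hex : ∃ i ∈ Finset.range n, ε / (2 * n) ≤ |T (i+1)| := by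
        by_contra hcon
        push_neg at hcon
        have h2 : ∑ i ∈ Finset.range n, |T (i+1)|
            < ∑ _i ∈ Finset.range n, ε / (2*n) := by
          refine Finset.sum_lt_sum_of_nonempty ?_ (fun i hi => hcon i hi)
          exact Finset.nonempty_range_iff.mpr (by omega)
        rw [Finset.sum_const, Finset.card_range, nsmul_eq_mul] at h2
        have h3 : (n:ℝ) * (ε / (2*n)) = ε/2 := by
          field_simp
        rw [h3] at h2
        linarith
      obtain ⟨i, _, hival⟩ := hex
      refine ⟨i+1, by omega, ?_, hival⟩
      by_contra hcp
      push_neg at hcp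
      have hz : T (i+1) = 0 := by
        rw [hT]
        simp only
        refine Gagg_eq_zero_of_gt M _ ?_ _ _
        rw [Fin.sum_cons]
        omega
      rw [hz, abs_zero] at hival
      have hpos : (0:ℝ) < ε / (2*n) := by positivity
      linarith
    obtain ⟨K₀, hK₀⟩ := exists_nat_ge (2 / ε)
    have hδK : ∀ s : Finset (E →L[ℝ] ℝ) × ℕ, K₀ ≤ s.2 → δf s ≤ ε / 2 := by
      intro s hs
      have h0 : (0:ℝ) < 2/ε := by positivity
      have h1 : 2/ε ≤ (s.2:ℝ) + 1 := by
        have h2 : (K₀:ℝ) ≤ (s.2:ℝ) := by exact_mod_cast hs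
        linarith
      have h3 := one_div_le_one_div_of_le h0 h1
      rw [one_div_div] at h3
      exact h3
    let cf : Finset (E →L[ℝ] ℝ) × ℕ → ℕ :=
      fun s => if h : δf s ≤ ε/2 then (hsplit s h).choose else 1
    have hcf1 : ∀ s, (h : δf s ≤ ε/2) → 1 ≤ cf s ∧ cf s ≤ p ∧
        ε / (2 * n) ≤ |Gagg M (Fin.cons (cf s) b)
          (Fin.cons (y (νc s) - y (βc s)) (fun j => uu j (νc s))) (y (βc s))| := by
      intro s h
      have : cf s = (hsplit s h).choose := dif_pos h
      rw [this]
      exact (hsplit s h).choose_spec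
    haveI : Nonempty (Finset (E →L[ℝ] ℝ) × ℕ) := ⟨(∅, 0)⟩
    have hc₀ : ∃ c₀, 1 ≤ c₀ ∧ c₀ ≤ p ∧
        ((atTop : Filter (Finset (E →L[ℝ] ℝ) × ℕ))
          ⊓ 𝓟 {s | K₀ ≤ s.2 ∧ cf s = c₀}).NeBot := by
      by_contra hcon
      push_neg at hcon
      have hbots : ∀ c, 1 ≤ c → c ≤ p →
          {s : Finset (E →L[ℝ] ℝ) × ℕ | K₀ ≤ s.2 ∧ cf s = c}ᶜ
            ∈ (atTop : Filter (Finset (E →L[ℝ] ℝ) × ℕ)) := by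
        intro c h1 h2
        have h3 := hcon c h1 h2
        rwa [Filter.inf_principal_eq_bot] at h3
      have hall : ∀ᶠ s : Finset (E →L[ℝ] ℝ) × ℕ in atTop,
          ∀ c ∈ Finset.Icc 1 p, ¬(K₀ ≤ s.2 ∧ cf s = c) := by
        rw [Filter.eventually_all_finset]
        intro c hc
        obtain ⟨h1, h2⟩ := Finset.mem_Icc.mp hc
        exact hbots c h1 h2
      have hK : ∀ᶠ s : Finset (E →L[ℝ] ℝ) × ℕ in atTop, K₀ ≤ s.2 := by
        refine Filter.eventually_atTop.mpr ⟨(∅, K₀), fun s hs => ?_⟩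
        exact hs.2
      obtain ⟨s, hs1, hs2⟩ := (hall.and hK).exists
      have h3 := hcf1 s (hδK s hs2)
      exact hs1 (cf s) (Finset.mem_Icc.mpr ⟨h3.1, h3.2.1⟩) ⟨hs2, rfl⟩
    obtain ⟨c₀, hc₀1, hc₀2, hc₀3⟩ := hc₀
    set F' : Filter (Finset (E →L[ℝ] ℝ) × ℕ) :=
      atTop ⊓ 𝓟 {s | K₀ ≤ s.2 ∧ cf s = c₀} with hF'
    haveI : F'.NeBot := hc₀3
    -- convergence of the stage nets against any functional
    have key : ∀ (f : Finset (E →L[ℝ] ℝ) × ℕ → E) (γ : E →L[ℝ] ℝ),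
        (∀ s, γ ∈ s.1 → |γ (f s)| ≤ δf s) →
        Tendsto (fun s => γ (f s)) F' (𝓝 0) := by
      intro f γ hsmall
      rw [Metric.tendsto_nhds]
      intro ε₀ hε₀
      obtain ⟨k₁, hk₁⟩ := exists_nat_one_div_lt hε₀
      have hmem : {s : Finset (E →L[ℝ] ℝ) × ℕ | ({γ}, k₁) ≤ s} ∈ F' :=
        Filter.mem_inf_of_left (Filter.mem_atTop _)
      filter_upwards [hmem] with s hs
      rw [Real.dist_eq, sub_zero]
      have hγs : γ ∈ s.1 := hs.1 (Finset.mem_singleton_self γ)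
      have h1 := hsmall s hγs
      have h2 : δf s ≤ 1/((k₁:ℝ)+1) := by
        refine one_div_le_one_div_of_le (by positivity) ?_
        have h4 : (k₁:ℝ) ≤ (s.2:ℝ) := by exact_mod_cast hs.2
        linarith
      calc |γ (f s)| ≤ δf s := h1
        _ ≤ 1/((k₁:ℝ)+1) := h2
        _ < ε₀ := hk₁
    -- assemble the recursive application
    let τ' : Type (max u v) := ULift.{v} (Finset (E →L[ℝ] ℝ) × ℕ)
    let F'' : Filter τ' := Filter.map ULift.up F'
    haveI : F''.NeBot := Filter.map_neBot
    let dnet : Finset (E →L[ℝ] ℝ) × ℕ → E := fun s => y (νc s) - y (βc s)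
    let uu' : Fin (r+1) → τ' → E :=
      Fin.cons (fun s' => dnet s'.down) (fun j s' => uu j (νc s'.down))
    have hb' : ∀ j, 1 ≤ (Fin.cons c₀ b : Fin (r+1) → ℕ) j := by
      intro j
      refine Fin.cases ?_ ?_ j
      · rw [Fin.cons_zero]; exact hc₀1
      · intro j; rw [Fin.cons_succ]; exact hb j
    have hsum' : (∑ j, (Fin.cons c₀ b : Fin (r+1) → ℕ) j) + (p - c₀) = n := by
      rw [Fin.sum_cons]
      omega
    have hu' : ∀ j ν, ‖uu' j ν‖ ≤ max Cu (Cy + Cy) := by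
      intro j ν
      refine Fin.cases ?_ ?_ j
      · show ‖(Fin.cons (fun s' => dnet s'.down) (fun j s' => uu j (νc s'.down))
          : Fin (r+1) → τ' → E) 0 ν‖ ≤ _
        rw [Fin.cons_zero]
        refine le_trans (norm_sub_le _ _) (le_trans ?_ (le_max_right _ _))
        exact add_le_add (hy _) (hy _)
      · intro j
        show ‖(Fin.cons (fun s' => dnet s'.down) (fun j s' => uu j (νc s'.down))
          : Fin (r+1) → τ' → E) j.succ ν‖ ≤ _
        rw [Fin.cons_succ]
        exact le_trans (hu j _) (le_max_left _ _)
    have hnull' : ∀ j (γ : E →L[ℝ] ℝ),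
        Tendsto (fun ν => γ (uu' j ν)) F'' (𝓝 0) := by
      intro j γ
      rw [Filter.tendsto_map'_iff]
      refine Fin.cases ?_ ?_ j
      · have heq : ((fun ν => γ ((Fin.cons (fun s' => dnet s'.down)
            (fun j s' => uu j (νc s'.down)) : Fin (r+1) → τ' → E) 0 ν)) ∘ ULift.up)
            = fun s => γ (dnet s) := by
          funext s
          simp only [Function.comp_apply, Fin.cons_zero]
        rw [heq]
        refine key dnet γ ?_
        intro s hγs
        have h1 := hS1 s γ hγs
        have h2 := hS2 s γ hγs
        have h3 : γ (dnet s) = (γ (y (νc s)) - rl γ) - (γ (y (βc s)) - rl γ) := by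
          simp only [dnet, map_sub]
          ring
        rw [h3]
        calc |(γ (y (νc s)) - rl γ) - (γ (y (βc s)) - rl γ)|
            ≤ |γ (y (νc s)) - rl γ| + |γ (y (βc s)) - rl γ| := abs_sub _ _
          _ ≤ δf s / 2 + δf s / 2 := add_le_add h2 h1
          _ = δf s := by ring
      · intro j
        have heq : ((fun ν => γ ((Fin.cons (fun s' => dnet s'.down)
            (fun j s' => uu j (νc s'.down)) : Fin (r+1) → τ' → E) j.succ ν)) ∘ ULift.up)
            = fun s => γ (uu j (νc s)) := by
          funext s
          simp only [Function.comp_apply, Fin.cons_succ]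
        rw [heq]
        refine key (fun s => uu j (νc s)) γ ?_
        intro s hγs
        exact hS3 s j γ hγs
    have hEv' : ∀ᶠ ν in F'', ε / (2*n)
        ≤ |Gagg M (Fin.cons c₀ b) (fun j => uu' j ν) (y (βc ν.down))| := by
      rw [Filter.eventually_map]
      have hmem : {s : Finset (E →L[ℝ] ℝ) × ℕ | K₀ ≤ s.2 ∧ cf s = c₀} ∈ F' :=
        Filter.mem_inf_of_right (Filter.mem_principal_self _)
      filter_upwards [hmem] with s hs
      have h3 := hcf1 s (hδK s hs.1)
      have h4 := h3.2.2
      rw [hs.2] at h4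
      have h5 : (fun j => uu' j (ULift.up s))
          = Fin.cons (y (νc s) - y (βc s)) (fun j => uu j (νc s)) := by
        funext j
        refine Fin.cases ?_ ?_ j
        · show (Fin.cons (fun s' => dnet s'.down) (fun j s' => uu j (νc s'.down))
            : Fin (r+1) → τ' → E) 0 (ULift.up s) = _
          rw [Fin.cons_zero, Fin.cons_zero]
        · intro j
          show (Fin.cons (fun s' => dnet s'.down) (fun j s' => uu j (νc s'.down))
            : Fin (r+1) → τ' → E) j.succ (ULift.up s) = _
          rw [Fin.cons_succ, Fin.cons_succ]
      rw [h5]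
      exact h4
    exact IH (p - c₀) (by omega) (r+1) (Fin.cons c₀ b) (Nat.succ_pos r) hb' hsum'
      τ' F'' (by infer_instance) uu' (max Cu (Cy + Cy)) hu' hnull'
      (fun ν => y (βc ν.down)) Cy (fun ν => hy _) (ε/(2*n)) (by positivity) hEv'

end Stmt11Aux

open Stmt11Aux

/-- If `(S_α)` is a bounded net of operators with `S_α* γ → γ` for all `γ ∈ E*`, then
`‖P − P∘S_α‖ → 0` for every `P ∈ P_w(ⁿE)`. -/
theorem stmt11 {E : Type u} [NormedAddCommGroup E] [NormedSpace ℝ E]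
    (n : ℕ) {ι : Type v} (l : Filter ι) [l.NeBot]
    (S : ι → E →L[ℝ] E) (hb : ∃ C : ℝ, ∀ i, ‖S i‖ ≤ C)
    (hadj : ∀ γ : E →L[ℝ] ℝ, Tendsto (fun i => ‖γ.comp (S i) - γ‖) l (𝓝 0))
    (P : E → ℝ) (hP : WCB n P) :
    Tendsto (fun i => polyNorm (fun x => P x - P (S i x))) l (𝓝 0) := by
  classical
  obtain ⟨hHomog, hWC⟩ := hP
  obtain ⟨M, hPM⟩ := hHomog
  obtain ⟨C, hC⟩ := hb
  haveI : Nonempty ι := nonempty_of_neBot l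
  have hC0 : (0:ℝ) ≤ C := le_trans (norm_nonneg _) (hC (Classical.arbitrary ι))
  have hM : ∀ x₀ : E, WCBat (fun x : E => M (fun _ => x)) x₀ := by
    intro x₀
    have heq : (fun x : E => M (fun _ => x)) = P := by
      funext x
      rw [hPM x]
    rw [heq]
    exact hWC x₀
  have hsup : ∀ ε : ℝ, 0 < ε →
      ∀ᶠ i in l, ∀ x : E, ‖x‖ ≤ 1 → |P x - P (S i x)| ≤ ε := by
    intro ε hε
    rcases Nat.eq_zero_or_pos n with hn0 | hn1
    · refine Filter.Eventually.of_forall (fun i x _ => ?_)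
      subst hn0
      rw [hPM, hPM]
      have heq0 : (fun _ : Fin 0 => x) = (fun _ : Fin 0 => S i x) := by
        funext j
        exact j.elim0
      rw [heq0, sub_self, abs_zero]
      exact le_of_lt hε
    · by_contra hcon
      rw [Filter.not_eventually] at hcon
      have hNB : (l ⊓ 𝓟 {i | ¬ ∀ z : E, ‖z‖ ≤ 1 → |P z - P (S i z)| ≤ ε}).NeBot :=
        Filter.frequently_iff_neBot.mp hcon
      set U₀ : Ultrafilter ι := @Ultrafilter.of _ _ hNB with hU₀def
      have hle : (U₀ : Filter ι) ≤ _ := @Ultrafilter.of_le _ _ hNB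
      have hU₀l : (U₀ : Filter ι) ≤ l := hle.trans inf_le_left
      have hBad : {i | ¬ ∀ z : E, ‖z‖ ≤ 1 → |P z - P (S i z)| ≤ ε} ∈ U₀ :=
        (hle.trans inf_le_right) (Filter.mem_principal_self _)
      have hwit : ∀ i : ι, ∃ x : E, ‖x‖ ≤ 1 ∧
          ((¬ ∀ z : E, ‖z‖ ≤ 1 → |P z - P (S i z)| ≤ ε) → ε < |P x - P (S i x)|) := by
        intro i
        by_cases hi : ∀ z : E, ‖z‖ ≤ 1 → |P z - P (S i z)| ≤ ε
        · exact ⟨0, by simp, fun h => absurd hi h⟩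
        · push_neg at hi
          obtain ⟨z, hz1, hz2⟩ := hi
          exact ⟨z, hz1, fun _ => hz2⟩
      choose xs hxs1 hxs2 using hwit
      set hnet : ι → E := fun i => xs i - S i (xs i) with hhnet
      set ynet : ι → E := fun i => S i (xs i) with hynet
      have hxy : ∀ i, xs i = ynet i + hnet i := by
        intro i
        simp only [hhnet, hynet]
        abel
      set b0 : Fin 0 → ℕ := fun j => j.elim0 with hb0
      set uu0 : Fin 0 → E := fun j => j.elim0 with huu0
      have hbn0 : ∀ j : Fin 0, b0 j ≤ n := fun j => j.elim0
      have hsplitP : ∀ i, P (xs i) - P (ynet i)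
          = ∑ c ∈ Finset.range n,
              Gagg M (Fin.cons (c+1) b0) (Fin.cons (hnet i) uu0) (ynet i) := by
        intro i
        have h1 : P (xs i) = M (fun _ => ynet i + hnet i) := by
          rw [hPM]
          congr 1
          funext j
          rw [← hxy i]
        have h2 := Gagg_nil M b0 uu0 (ynet i + hnet i)
        have h3 := Gagg_split M b0 hbn0 uu0 (ynet i) (hnet i)
        have h4 := Gagg_nil M b0 uu0 (ynet i)
        have h5 := Gagg_cons_zero M b0 hbn0 uu0 (hnet i) (ynet i)
        calc P (xs i) - P (ynet i)
            = M (fun _ => ynet i + hnet i) - M (fun _ => ynet i) := by rw [h1, hPM]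
          _ = Gagg M b0 uu0 (ynet i + hnet i) - Gagg M b0 uu0 (ynet i) := by
              rw [h2, h4]
          _ = (∑ c ∈ Finset.range (n+1),
                Gagg M (Fin.cons c b0) (Fin.cons (hnet i) uu0) (ynet i))
              - Gagg M b0 uu0 (ynet i) := by rw [h3]
          _ = ∑ c ∈ Finset.range n,
                Gagg M (Fin.cons (c+1) b0) (Fin.cons (hnet i) uu0) (ynet i) := by
              rw [Finset.sum_range_succ', h5]
              ring
      have hpick : ∀ i : ι, ∃ c, c < n ∧
          ((¬ ∀ z : E, ‖z‖ ≤ 1 → |P z - P (S i z)| ≤ ε) →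
            ε / n ≤ |Gagg M (Fin.cons (c+1) b0) (Fin.cons (hnet i) uu0) (ynet i)|) := by
        intro i
        by_cases hi : ∀ z : E, ‖z‖ ≤ 1 → |P z - P (S i z)| ≤ ε
        · exact ⟨0, hn1, fun h => absurd hi h⟩
        · have hbig := hxs2 i hi
          rw [hsplitP i] at hbig
          have hex : ∃ c ∈ Finset.range n, ε / n
              ≤ |Gagg M (Fin.cons (c+1) b0) (Fin.cons (hnet i) uu0) (ynet i)| := by
            by_contra hcon2
            push_neg at hcon2
            have h2 : |∑ c ∈ Finset.range n,
                Gagg M (Fin.cons (c+1) b0) (Fin.cons (hnet i) uu0) (ynet i)|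
                ≤ ∑ c ∈ Finset.range n, |Gagg M (Fin.cons (c+1) b0)
                    (Fin.cons (hnet i) uu0) (ynet i)| :=
              Finset.abs_sum_le_sum_abs _ _
            have h3 : ∑ c ∈ Finset.range n, |Gagg M (Fin.cons (c+1) b0)
                (Fin.cons (hnet i) uu0) (ynet i)|
                < ∑ _c ∈ Finset.range n, ε / n := by
              refine Finset.sum_lt_sum_of_nonempty ?_ (fun c hc => hcon2 c hc)
              exact Finset.nonempty_range_iff.mpr (by omega)
            rw [Finset.sum_const, Finset.card_range, nsmul_eq_mul] at h3
            have h4 : (n:ℝ) * (ε / n) = ε := by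
              field_simp
            rw [h4] at h3
            linarith
          obtain ⟨c, hc1, hc2⟩ := hex
          exact ⟨c, Finset.mem_range.mp hc1, fun _ => hc2⟩
      choose cp hcp1 hcp2 using hpick
      have hcov : (⋃ c ∈ (Finset.range n : Finset ℕ), {i : ι | cp i = c}) ∈ U₀ := by
        have : (⋃ c ∈ (Finset.range n : Finset ℕ), {i : ι | cp i = c}) = Set.univ := by
          refine Set.eq_univ_of_forall (fun i => ?_)
          refine Set.mem_biUnion ?_ rfl
          exact Finset.mem_coe.mpr (Finset.mem_range.mpr (hcp1 i))
        rw [this]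
        exact Filter.univ_mem
      have hex₀ : ∃ c₀ ∈ (Finset.range n : Finset ℕ), {i : ι | cp i = c₀} ∈ U₀ := by
        have hfin : (↑(Finset.range n) : Set ℕ).Finite := (Finset.range n).finite_toSet
        obtain ⟨c₀, hc₀a, hc₀b⟩ := (Ultrafilter.finite_biUnion_mem_iff hfin).mp hcov
        exact ⟨c₀, Finset.mem_coe.mp hc₀a, hc₀b⟩
      obtain ⟨c₀, hc₀r, hc₀U⟩ := hex₀
      have hc₀n : c₀ < n := Finset.mem_range.mp hc₀r
      -- apply the main claim
      let τ' : Type (max u v) := ULift.{u} ι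
      let F'' : Filter τ' := Filter.map ULift.up (U₀ : Filter ι)
      haveI : (U₀ : Filter ι).NeBot := U₀.neBot
      haveI : F''.NeBot := Filter.map_neBot
      let uu' : Fin 1 → τ' → E := Fin.cons (fun i' => hnet i'.down) (fun j => j.elim0)
      have hu' : ∀ j ν, ‖uu' j ν‖ ≤ 1 + C := by
        intro j ν
        refine Fin.cases ?_ ?_ j
        · show ‖(Fin.cons (fun i' => hnet i'.down) (fun j => j.elim0)
            : Fin 1 → τ' → E) 0 ν‖ ≤ _
          rw [Fin.cons_zero]
          refine le_trans (norm_sub_le _ _) ?_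
          refine add_le_add (hxs1 _) ?_
          refine le_trans ((S ν.down).le_opNorm _) ?_
          calc ‖S ν.down‖ * ‖xs ν.down‖ ≤ C * 1 :=
                mul_le_mul (hC _) (hxs1 _) (norm_nonneg _) hC0
            _ = C := mul_one C
        · intro j
          exact j.elim0
      have hnull' : ∀ (j : Fin 1) (γ : E →L[ℝ] ℝ),
          Tendsto (fun ν => γ (uu' j ν)) F'' (𝓝 0) := by
        intro j γ
        rw [Filter.tendsto_map'_iff]
        refine Fin.cases ?_ ?_ j
        · have heq : ((fun ν => γ ((Fin.cons (fun i' => hnet i'.down) (fun j => j.elim0)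
              : Fin 1 → τ' → E) 0 ν)) ∘ ULift.up) = fun i => γ (hnet i) := by
            funext i
            simp only [Function.comp_apply, Fin.cons_zero]
          rw [heq]
          refine squeeze_zero_norm (fun i => ?_) ((hadj γ).mono_left hU₀l)
          have h1 : γ (hnet i) = -((γ.comp (S i) - γ) (xs i)) := by
            rw [hhnet]
            simp only [ContinuousLinearMap.sub_apply, ContinuousLinearMap.comp_apply,
              map_sub]
            ring
          rw [h1, norm_neg]
          refine le_trans ((γ.comp (S i) - γ).le_opNorm _) ?_
          exact mul_le_of_le_one_right (norm_nonneg _) (hxs1 i)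
        · intro j
          exact j.elim0
      have hEv' : ∀ᶠ ν in F'', ε / n
          ≤ |Gagg M (Fin.cons (c₀+1) b0) (fun j => uu' j ν) (ynet ν.down)| := by
        rw [Filter.eventually_map]
        have hmem : {i : ι | cp i = c₀} ∩
            {i | ¬ ∀ z : E, ‖z‖ ≤ 1 → |P z - P (S i z)| ≤ ε} ∈ U₀ :=
          Filter.inter_mem hc₀U hBad
        filter_upwards [hmem] with i hi
        have h4 := hcp2 i hi.2
        rw [hi.1] at h4
        have h5 : (fun j => uu' j (ULift.up i))
            = Fin.cons (hnet i) uu0 := by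
          funext j
          refine Fin.cases ?_ ?_ j
          · show (Fin.cons (fun i' => hnet i'.down) (fun j => j.elim0)
              : Fin 1 → τ' → E) 0 (ULift.up i) = _
            rw [Fin.cons_zero, Fin.cons_zero]
          · intro j
            exact j.elim0
        rw [h5]
        exact h4
      have hy' : ∀ ν : τ', ‖ynet ν.down‖ ≤ C := by
        intro ν
        refine le_trans ((S ν.down).le_opNorm _) ?_
        calc ‖S ν.down‖ * ‖xs ν.down‖ ≤ C * 1 :=
              mul_le_mul (hC _) (hxs1 _) (norm_nonneg _) hC0
          _ = C := mul_one C
      have hb' : ∀ j : Fin 1, 1 ≤ (Fin.cons (c₀+1) b0 : Fin 1 → ℕ) j := by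
        intro j
        refine Fin.cases ?_ ?_ j
        · rw [Fin.cons_zero]
          omega
        · intro j
          exact j.elim0
      have hsum' : (∑ j, (Fin.cons (c₀+1) b0 : Fin 1 → ℕ) j) + (n - (c₀+1)) = n := by
        rw [Fin.sum_cons]
        have : (∑ j : Fin 0, b0 j) = 0 := rfl
        rw [this]
        omega
      exact claim M hM (n - (c₀+1)) 1 (Fin.cons (c₀+1) b0) (by omega) hb' hsum'
        τ' F'' (by infer_instance) uu' (1 + C) hu' hnull'
        (fun ν => ynet ν.down) C hy' (ε / n) (by positivity) hEv'
  -- conclude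
  rw [Metric.tendsto_nhds]
  intro ε hε
  filter_upwards [hsup (ε/2) (by positivity)] with i hi
  rw [Real.dist_eq, sub_zero]
  have hf0 : |P (0:E) - P (S i 0)| = 0 := by
    rw [map_zero (S i), sub_self, abs_zero]
  have hne : (0:ℝ) ∈ {r : ℝ | ∃ x : E, ‖x‖ ≤ 1 ∧ r = |P x - P (S i x)|} :=
    ⟨0, by simp, hf0.symm⟩
  have hub : ∀ r ∈ {r : ℝ | ∃ x : E, ‖x‖ ≤ 1 ∧ r = |P x - P (S i x)|}, r ≤ ε/2 := by
    rintro r ⟨x, hx, rfl⟩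
    exact hi x hx
  have hbdd : BddAbove {r : ℝ | ∃ x : E, ‖x‖ ≤ 1 ∧ r = |P x - P (S i x)|} :=
    ⟨ε/2, fun r hr => hub r hr⟩
  have hle : polyNorm (fun x => P x - P (S i x)) ≤ ε/2 := csSup_le ⟨0, hne⟩ hub
  have hge : 0 ≤ polyNorm (fun x => P x - P (S i x)) := le_csSup hbdd hne
  rw [abs_of_nonneg hge]
  linarith
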